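/- Let D be the unique ℚ-linear derivation of the polynomial ring ℚ[x,y] satisfying D(x) = xy² and D(y) = xy². Then for every n ≥ 1, D^n(x) = Σ_{m=1}^{n} C(n,m) x^m y^{2n+1-m}, where C(n,m) denotes the number of Stirling permutations of the multiset [n]_2 with exactly m-1 ascents. -/

import Mathlib

open MvPolynomial

/-- The number of ascents of a word `w 0, w 1, …` given as a function on `Fin m`. -/
def wordAscents {m : ℕ} {α : Type*} [LinearOrder α] (w : Fin m → α) : ℕ :=
  ((List.ofFn w).zip (List.ofFn w).tail).countP fun p => decide (p.1 < p.2)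

/-- A Stirling permutation of the multiset `{1,1,2,2,…,n,n}`: every value occurs exactly
twice, and whenever `j < k < l` and `w j = w l` one has `w k > w j`. -/
def IsStirlingPerm {n : ℕ} (w : Fin (2 * n) → Fin n) : Prop :=
  (∀ v : Fin n, (Finset.univ.filter fun i => w i = v).card = 2) ∧
  (∀ j k l : Fin (2 * n), j < k → k < l → w j = w l → w j < w k)

/-- `stirlingC n m` is the number of Stirling permutations of `{1,1,…,n,n}` with
exactly `m - 1` ascents. -/
noncomputable def stirlingC (n m : ℕ) : ℕ :=
  Nat.card {w : Fin (2 * n) → Fin n // IsStirlingPerm w ∧ wordAscents w = m - 1}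

namespace StirlingAux

/-- Recursive ascent count. -/
def ascR : List ℕ → ℕ
  | [] => 0
  | [_] => 0
  | a :: b :: t => (if a < b then 1 else 0) + ascR (b :: t)

lemma ascR_eq_countP : ∀ l : List ℕ,
    (l.zip l.tail).countP (fun p => decide (p.1 < p.2)) = ascR l
  | [] => rfl
  | [_] => rfl
  | a :: b :: t => by
    have := ascR_eq_countP (b :: t)
    simp only [List.zip_cons_cons, List.tail_cons, List.countP_cons, ascR] at *
    simp only [this]
    by_cases h : a < b <;> simp [h] <;> omega

/-- The "glue" contribution of a concatenation. -/
def pay (x y : List ℕ) : ℕ :=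
  match x.getLast?, y.head? with
  | some a, some b => if a < b then 1 else 0
  | _, _ => 0

@[simp] lemma pay_nil_left (y : List ℕ) : pay [] y = 0 := rfl
@[simp] lemma pay_nil_right (x : List ℕ) : pay x [] = 0 := by
  unfold pay; cases x.getLast? <;> rfl

lemma ascR_append : ∀ x y : List ℕ, ascR (x ++ y) = ascR x + pay x y + ascR y := by
  intro x
  induction x with
  | nil => intro y; simp [ascR]
  | cons a x ih =>
    intro y
    cases x with
    | nil =>
      cases y with
      | nil => simp [ascR]
      | cons c t => simp [ascR, pay]
    | cons b x' =>
      have : (a :: b :: x') ++ y = a :: b :: (x' ++ y) := rfl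
      rw [this]
      show (if a < b then 1 else 0) + ascR (b :: (x' ++ y)) = _
      have h2 : ascR ((b :: x') ++ y) = ascR (b :: x') + pay (b :: x') y + ascR y := ih y
      have h3 : (b :: x') ++ y = b :: (x' ++ y) := rfl
      rw [h3] at h2
      rw [h2]
      have h4 : pay (a :: b :: x') y = pay (b :: x') y := by
        unfold pay; rw [List.getLast?_cons_cons]
      rw [ascR, h4]; omega

lemma ascR_eq_card_filter : ∀ l : List ℕ,
    ascR l = ((Finset.range (l.length - 1)).filter
      fun i => l.getD i 0 < l.getD (i + 1) 0).card
  | [] => by simp [ascR]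
  | [a] => by simp [ascR]
  | a :: b :: t => by
    have ih := ascR_eq_card_filter (b :: t)
    rw [Finset.card_filter] at *
    have hlen : (a :: b :: t).length - 1 = t.length + 1 := by simp
    rw [hlen]
    rw [Finset.sum_range_succ' _ t.length]
    have h0 : ((a :: b :: t).getD 0 0 < (a :: b :: t).getD 1 0) = (a < b) := by simp
    have hl2 : (b :: t).length - 1 = t.length := by simp
    rw [hl2] at ih
    rw [ascR, ih]
    simp only [List.getD_cons_succ, List.getD_cons_zero]
    omega


def stc (l : List ℕ) : Prop :=
  ∀ i j k : ℕ, i < j → j < k → k < l.length →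
    l.getD i 0 = l.getD k 0 → l.getD i 0 < l.getD j 0

def cnt2 (n : ℕ) (l : List ℕ) : Prop := ∀ v : ℕ, l.count v = if v < n then 2 else 0

def SPL (n : ℕ) (l : List ℕ) : Prop := cnt2 n l ∧ stc l

lemma cnt2_mem_lt {n l} (h : cnt2 n l) {u : ℕ} (hu : u ∈ l) : u < n := by
  by_contra hc
  have h1 := h u
  rw [if_neg hc] at h1
  have h2 : 0 < l.count u := List.count_pos_iff.2 hu
  omega

lemma cnt2_length {n l} (h : cnt2 n l) : l.length = 2 * n := by
  have h1 : l.length = Multiset.card (l : Multiset ℕ) := by simp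
  rw [h1, ← Multiset.toFinset_sum_count_eq]
  have hsub : (l : Multiset ℕ).toFinset ⊆ Finset.range n := by
    intro v hv
    simp only [Multiset.mem_toFinset, Multiset.mem_coe] at hv
    exact Finset.mem_range.2 (cnt2_mem_lt h hv)
  rw [Finset.sum_subset hsub]
  · have h2 : ∀ v ∈ Finset.range n, Multiset.count v (l : Multiset ℕ) = 2 := by
      intro v hv
      have := h v
      rw [if_pos (Finset.mem_range.1 hv)] at this
      simpa using this
    rw [Finset.sum_congr rfl h2]
    simp [mul_comm]
  · intro v _ hv
    simp only [Multiset.mem_toFinset, Multiset.mem_coe] at hv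
    simpa using List.count_eq_zero_of_not_mem hv

def ins (n : ℕ) (l : List ℕ) (g : ℕ) : List ℕ := l.take g ++ n :: n :: l.drop g

lemma ins_length {n l g} (hg : g ≤ l.length) : (ins n l g).length = l.length + 2 := by
  simp [ins]; omega

lemma ins_getD {n : ℕ} {l : List ℕ} {g : ℕ} (hg : g ≤ l.length) (i : ℕ) :
    (ins n l g).getD i 0 =
      if i < g then l.getD i 0 else if i < g + 2 then n else l.getD (i - 2) 0 := by
  have hlt : (l.take g).length = g := by simp [hg]
  unfold ins
  rcases lt_or_ge i g with h | h
  · rw [List.getD_append _ _ _ _ (by omega), if_pos h]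
    rcases lt_or_ge i l.length with h2 | h2
    · rw [List.getD_eq_getElem _ _ (by simp; omega), List.getD_eq_getElem _ _ (by omega),
        List.getElem_take]
    · omega
  · rw [List.getD_append_right _ _ _ _ (by omega), if_neg (by omega), hlt]
    rcases lt_or_ge i (g + 2) with h2 | h2
    · rw [if_pos h2]
      have : i - g = 0 ∨ i - g = 1 := by omega
      rcases this with h3 | h3 <;> rw [h3] <;> rfl
    · rw [if_neg (by omega)]
      have h4 : i - g = (i - g - 2) + 2 := by omega
      rw [h4, List.getD_cons_succ, List.getD_cons_succ]
      rcases lt_or_ge (i - 2) l.length with h3 | h3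
      · rw [List.getD_eq_getElem _ _ (by simp; omega), List.getD_eq_getElem _ _ (by omega),
          List.getElem_drop]
        congr 1; omega
      · rw [List.getD_eq_default _ _ (by simp; omega), List.getD_eq_default _ _ (by omega)]

lemma ins_count {n l g} (v : ℕ) :
    (ins n l g).count v = l.count v + if v = n then 2 else 0 := by
  unfold ins
  rw [List.count_append, List.count_cons, List.count_cons]
  have h : l.count v = (l.take g).count v + (l.drop g).count v := by
    rw [← List.count_append, List.take_append_drop]
  rw [h]
  rcases eq_or_ne n v with h1 | h1
  · subst h1; simp; omega
  · simp [h1, Ne.symm h1]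

lemma SPL_ins {n : ℕ} {l : List ℕ} {g : ℕ} (h : SPL n l) (hg : g ≤ l.length) :
    SPL (n + 1) (ins n l g) := by
  obtain ⟨hc, hs⟩ := h
  have hmem : ∀ i' : ℕ, i' < l.length → l.getD i' 0 < n := by
    intro i' hi'
    apply cnt2_mem_lt hc
    rw [List.getD_eq_getElem _ _ hi']
    exact List.getElem_mem _
  constructor
  · intro v
    rw [ins_count, hc v]
    split_ifs <;> omega
  · intro i j k hij hjk hk heq
    have hklen : k < l.length + 2 := by rwa [ins_length hg] at hk
    rw [ins_getD hg i, ins_getD hg k] at heq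
    rw [ins_getD hg i, ins_getD hg j]
    by_cases hi : i < g
    · rw [if_pos hi] at heq ⊢
      have hvi : l.getD i 0 < n := hmem i (by omega)
      by_cases hkg : k < g
      · rw [if_pos hkg] at heq
        rw [if_pos (show j < g by omega)]
        exact hs i j k hij hjk (by omega) heq
      · by_cases hkg2 : k < g + 2
        · rw [if_neg hkg, if_pos hkg2] at heq; omega
        · rw [if_neg hkg, if_neg hkg2] at heq
          by_cases hjg : j < g
          · rw [if_pos hjg]
            exact hs i j (k - 2) hij (by omega) (by omega) heq
          · by_cases hjg2 : j < g + 2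
            · rw [if_neg hjg, if_pos hjg2]; omega
            · rw [if_neg hjg, if_neg hjg2]
              exact hs i (j - 2) (k - 2) (by omega) (by omega) (by omega) heq
    · by_cases hig : i < g + 2
      · rw [if_neg hi, if_pos hig] at heq
        have hk2 : ¬ k < g := by omega
        have hk3 : ¬ k < g + 2 := by omega
        rw [if_neg hk2, if_neg hk3] at heq
        have := hmem (k - 2) (by omega)
        omega
      · rw [if_neg hi, if_neg hig] at heq ⊢
        have hvi : l.getD (i - 2) 0 < n := hmem (i - 2) (by omega)
        have hk2 : ¬ k < g := by omega
        have hk3 : ¬ k < g + 2 := by omega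
        rw [if_neg hk2, if_neg hk3] at heq
        have hj2 : ¬ j < g := by omega
        by_cases hjg2 : j < g + 2
        · rw [if_neg hj2, if_pos hjg2]; omega
        · rw [if_neg hj2, if_neg hjg2]
          exact hs (i - 2) (j - 2) (k - 2) (by omega) (by omega) (by omega) heq

lemma SPL_of_ins {n : ℕ} {l : List ℕ} {g : ℕ} (hg : g ≤ l.length)
    (h : SPL (n + 1) (ins n l g)) : SPL n l := by
  obtain ⟨hc, hs⟩ := h
  constructor
  · intro v
    have h1 := hc v
    rw [ins_count] at h1
    split_ifs at h1 ⊢ <;> omega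
  · intro i j k hij hjk hk heq
    have key : ∀ i' : ℕ, i' < l.length →
        (ins n l g).getD (if i' < g then i' else i' + 2) 0 = l.getD i' 0 := by
      intro i' hi'
      by_cases h1 : i' < g
      · rw [if_pos h1, ins_getD hg, if_pos h1]
      · rw [if_neg h1, ins_getD hg, if_neg (by omega), if_neg (by omega)]
        congr 1
    have h1 := key i (by omega)
    have h2 := key j (by omega)
    have h3 := key k hk
    have hmono : (if i < g then i else i + 2) < (if j < g then j else j + 2) ∧
        (if j < g then j else j + 2) < (if k < g then k else k + 2) ∧
        (if k < g then k else k + 2) < l.length + 2 := by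
      split_ifs <;> omega
    have h4 := hs _ _ _ hmono.1 hmono.2.1 (by rw [ins_length hg]; exact hmono.2.2)
      (by rw [h1, h3]; exact heq)
    rwa [h1, h2] at h4



lemma getLast?_take {l : List ℕ} {g : ℕ} (h1 : 1 ≤ g) (h2 : g ≤ l.length) :
    (l.take g).getLast? = some (l.getD (g - 1) 0) := by
  rw [List.getLast?_eq_getElem?]
  have hlen : (l.take g).length = g := by simp [h2]
  rw [hlen, List.getElem?_take, if_pos (by omega)]
  rw [List.getD_eq_getElem _ _ (by omega), List.getElem?_eq_getElem (by omega)]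

lemma head?_drop' {l : List ℕ} {g : ℕ} (h : g < l.length) :
    (l.drop g).head? = some (l.getD g 0) := by
  rw [List.head?_drop, List.getD_eq_getElem _ _ h, List.getElem?_eq_getElem h]

/-- The ascent law for insertion. -/
lemma ascR_ins {n : ℕ} {l : List ℕ} {g : ℕ} (hmem : ∀ u ∈ l, u < n) (hg : g ≤ l.length) :
    ascR (ins n l g) = ascR l +
      (if g = 0 ∨ (g < l.length ∧ l.getD (g - 1) 0 < l.getD g 0) then 0 else 1) := by
  have hsplit : ascR l = ascR (l.take g) + pay (l.take g) (l.drop g) + ascR (l.drop g) := by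
    conv_lhs => rw [← List.take_append_drop g l]
    exact ascR_append _ _
  have hmid : (n : ℕ) :: n :: l.drop g = [n] ++ (n :: l.drop g) := rfl
  have h1 : ascR (ins n l g) =
      ascR (l.take g) + pay (l.take g) (n :: n :: l.drop g) + ascR (n :: n :: l.drop g) :=
    ascR_append _ _
  have h2 : ascR (n :: n :: l.drop g) = pay [n] (n :: l.drop g) + ascR (n :: l.drop g) := by
    rw [hmid, ascR_append]; simp [ascR]
  have h2' : pay [n] (n :: l.drop g) = 0 := by
    simp [pay]
  have h3 : ascR (n :: l.drop g) = pay [n] (l.drop g) + ascR (l.drop g) := by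
    have : (n : ℕ) :: l.drop g = [n] ++ l.drop g := rfl
    rw [this, ascR_append]; simp [ascR]
  have h4 : pay [n] (l.drop g) = 0 := by
    rcases lt_or_ge g l.length with h | h
    · rw [pay, head?_drop' h]
      simp only [List.getLast?_singleton]
      have : l.getD g 0 < n := hmem _ (by rw [List.getD_eq_getElem _ _ h]; exact List.getElem_mem _)
      rw [if_neg (by omega)]
    · rw [List.drop_eq_nil_of_le h]; simp [pay]
  rcases Nat.eq_zero_or_pos g with hg0 | hg1
  · subst hg0
    simp only [List.take_zero, List.drop_zero] at *
    rw [h1, h2, h2', h3, h4, if_pos (Or.inl trivial)]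
    have hp : pay ([] : List ℕ) (n :: n :: l) = 0 := rfl
    have ha : ascR ([] : List ℕ) = 0 := rfl
    rw [hp, ha]
    omega
  · have hlast : (l.take g).getLast? = some (l.getD (g - 1) 0) := getLast?_take hg1 hg
    have hpay1 : pay (l.take g) (n :: n :: l.drop g) = 1 := by
      rw [pay, hlast]
      simp only [List.head?_cons]
      have : l.getD (g - 1) 0 < n := hmem _
        (by rw [List.getD_eq_getElem _ _ (by omega)]; exact List.getElem_mem _)
      rw [if_pos this]
    rcases lt_or_ge g l.length with h | h
    · have hpay2 : pay (l.take g) (l.drop g) =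
          if l.getD (g - 1) 0 < l.getD g 0 then 1 else 0 := by
        rw [pay, hlast, head?_drop' h]
      rw [h1, h2, h2', h3, h4, hpay1, hsplit, hpay2]
      by_cases hasc : l.getD (g - 1) 0 < l.getD g 0
      · rw [if_pos hasc, if_pos (Or.inr ⟨h, hasc⟩)]; omega
      · have hcond : ¬(g = 0 ∨ (g < l.length ∧ l.getD (g - 1) 0 < l.getD g 0)) := by
          push_neg; exact ⟨by omega, fun _ => le_of_not_gt hasc⟩
        rw [if_neg hasc, if_neg hcond]
        omega
    · have hpay2 : pay (l.take g) (l.drop g) = 0 := by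
        rw [List.drop_eq_nil_of_le h]; rw [pay, hlast]; rfl
      rw [h1, h2, h2', h3, h4, hpay1, hsplit, hpay2]
      have hcond : ¬(g = 0 ∨ (g < l.length ∧ l.getD (g - 1) 0 < l.getD g 0)) := by
        push_neg; exact ⟨by omega, fun h' => absurd h' (by omega)⟩
      rw [if_neg hcond]
      omega




lemma indexOf_ins {n : ℕ} {l : List ℕ} {g : ℕ} (hmem : ∀ u ∈ l, u < n) (hg : g ≤ l.length) :
    (ins n l g).idxOf n = g := by
  unfold ins
  rw [List.idxOf_append_of_notMem
      (fun hmem' => absurd (hmem n (List.mem_of_mem_take hmem')) (by omega)),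
    List.idxOf_cons_self]
  simp [hg]

lemma SPL_split {n : ℕ} {l : List ℕ} (h : SPL (n + 1) l) :
    l.idxOf n + 1 < l.length ∧
    l = ins n (l.take (l.idxOf n) ++ l.drop (l.idxOf n + 2)) (l.idxOf n) ∧
    SPL n (l.take (l.idxOf n) ++ l.drop (l.idxOf n + 2)) := by
  set p := l.idxOf n with hpdef
  have hcn : l.count n = 2 := by have := h.1 n; rwa [if_pos (by omega)] at this
  have hmem : n ∈ l := by
    rw [← List.count_pos_iff]; omega
  have hp : p < l.length := List.idxOf_lt_length_iff.2 hmem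
  have hgetp : l[p] = n := List.getElem_idxOf hp
  have hnt : n ∉ l.take p := by
    intro hmem'
    have h1 : l.idxOf n = (l.take p).idxOf n := by
      conv_lhs => rw [← List.take_append_drop p l]
      exact List.idxOf_append_of_mem hmem'
    have h2 : (l.take p).idxOf n < (l.take p).length := List.idxOf_lt_length_iff.2 hmem'
    have h3 : (l.take p).length ≤ p := by simp
    omega
  have hcount_take : (l.take p).count n = 0 := List.count_eq_zero_of_not_mem hnt
  have htakesucc : l.take (p + 1) = l.take p ++ [l[p]] := by
    rw [List.take_succ, List.getElem?_eq_getElem hp]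
    rfl
  have hdropcount : (l.drop (p + 1)).count n = 1 := by
    have h1 : l.count n = (l.take (p + 1)).count n + (l.drop (p + 1)).count n := by
      rw [← List.count_append, List.take_append_drop]
    rw [htakesucc, List.count_append, hcount_take, hgetp] at h1
    simp at h1
    omega
  have hmem2 : n ∈ l.drop (p + 1) := by rw [← List.count_pos_iff]; omega
  set q := (l.drop (p + 1)).idxOf n with hqdef
  have hq : q < (l.drop (p + 1)).length := List.idxOf_lt_length_iff.2 hmem2
  have hgetq : l[p + 1 + q]'(by simp at hq; omega) = n := by
    have := List.getElem_idxOf hq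
    rwa [List.getElem_drop] at this
  have hq0 : q = 0 := by
    by_contra hq0
    have hstc := h.2 p (p + 1) (p + 1 + q) (by omega) (by omega) (by simp at hq; omega)
    rw [List.getD_eq_getElem _ _ hp, List.getD_eq_getElem _ _ (by simp at hq; omega),
      hgetp, hgetq] at hstc
    have h5 : l.getD (p + 1) 0 < n + 1 := by
      apply cnt2_mem_lt h.1
      rw [List.getD_eq_getElem _ _ (by simp at hq; omega)]
      exact List.getElem_mem _
    have := hstc rfl
    rw [List.getD_eq_getElem _ _ (by simp at hq; omega)] at *
    omega
  have hp1 : p + 1 < l.length := by simp at hq; omega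
  have hgetp1 : l[p + 1]'hp1 = n := by
    have := hgetq; simpa [hq0] using this
  have hsplit : l = l.take p ++ n :: n :: l.drop (p + 2) := by
    conv_lhs => rw [← List.take_append_drop p l]
    congr 1
    rw [List.drop_eq_getElem_cons hp, hgetp]
    congr 1
    rw [List.drop_eq_getElem_cons hp1, hgetp1]
  have hlen' : (l.take p ++ l.drop (p + 2)).length = l.length - 2 := by
    simp; omega
  have htake' : (l.take p ++ l.drop (p + 2)).take p = l.take p :=
    List.take_left' (by simp; omega)
  have hdrop' : (l.take p ++ l.drop (p + 2)).drop p = l.drop (p + 2) :=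
    List.drop_left' (by simp; omega)
  have hins : l = ins n (l.take p ++ l.drop (p + 2)) p := by
    rw [ins, htake', hdrop']
    exact hsplit
  have hgle : p ≤ (l.take p ++ l.drop (p + 2)).length := by rw [hlen']; omega
  refine ⟨hp1, hins, SPL_of_ins (g := p) hgle ?_⟩
  rw [← hins]; exact h



/-- Word of a permutation, as a list of naturals. -/
def toL {n m : ℕ} (w : Fin m → Fin n) : List ℕ := List.ofFn fun i => (w i : ℕ)

@[simp] lemma toL_length {n m : ℕ} (w : Fin m → Fin n) : (toL w).length = m := by
  simp [toL]

lemma countP_ofFn {m : ℕ} {α : Type*} (w : Fin m → α) (p : α → Bool) :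
    (List.ofFn w).countP p = (Finset.univ.filter fun i => p (w i)).card := by
  induction m with
  | zero => simp
  | succ k ih =>
    rw [List.ofFn_succ, List.countP_cons, ih (fun i => w i.succ)]
    rw [Finset.card_filter, Finset.card_filter, Fin.sum_univ_succ]
    by_cases h : p (w 0) <;> simp [h] <;> omega

lemma toL_getD {n m : ℕ} (w : Fin m → Fin n) {i : ℕ} (hi : i < m) :
    (toL w).getD i 0 = (w ⟨i, hi⟩ : ℕ) := by
  rw [toL, List.getD_eq_getElem _ _ (by simpa using hi), List.getElem_ofFn]

lemma toL_mem_lt {n m : ℕ} (w : Fin m → Fin n) {u : ℕ} (hu : u ∈ toL w) : u < n := by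
  rw [toL, List.mem_ofFn] at hu
  obtain ⟨i, rfl⟩ := hu
  exact (w i).isLt

lemma wordAscents_eq_ascR {n m : ℕ} (w : Fin m → Fin n) :
    wordAscents w = ascR (toL w) := by
  rw [← ascR_eq_countP, wordAscents]
  have h1 : toL w = (List.ofFn w).map (fun x : Fin n => (x : ℕ)) := by
    rw [List.map_ofFn]; rfl
  rw [h1]
  have h2 : ((List.ofFn w).map (fun x : Fin n => (x : ℕ))).tail
      = (List.ofFn w).tail.map (fun x : Fin n => (x : ℕ)) := by
    rw [← List.map_tail]
  rw [h2, List.zip_map, List.countP_map]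
  congr 1

lemma toL_getD_fin {n m : ℕ} (w : Fin m → Fin n) (j : Fin m) :
    (toL w).getD (j : ℕ) 0 = (w j : ℕ) := by
  rw [toL_getD w j.isLt]

lemma isStirling_iff_SPL {n : ℕ} (w : Fin (2 * n) → Fin n) :
    IsStirlingPerm w ↔ SPL n (toL w) := by
  constructor
  · rintro ⟨hc, hs⟩
    constructor
    · intro v
      rw [toL, List.count_eq_countP, countP_ofFn]
      rcases lt_or_ge v n with hv | hv
      · rw [if_pos hv]
        have hset : (Finset.univ.filter fun i => ((w i : ℕ) == v) = true)
            = (Finset.univ.filter fun i => w i = ⟨v, hv⟩) := by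
          apply Finset.filter_congr
          intro i _
          simp [Fin.ext_iff]
        rw [hset, hc ⟨v, hv⟩]
      · rw [if_neg (by omega)]
        rw [Finset.card_eq_zero, Finset.filter_eq_empty_iff]
        intro i _
        simpa using fun h => absurd (h ▸ (w i).isLt) (by omega)
    · intro i j k hij hjk hk heq
      have hk' : k < 2 * n := by simpa using hk
      have hi' : i < 2 * n := by omega
      have hj' : j < 2 * n := by omega
      rw [toL_getD w hi', toL_getD w hk'] at heq
      rw [toL_getD w hi', toL_getD w hj']
      have := hs ⟨i, hi'⟩ ⟨j, hj'⟩ ⟨k, hk'⟩ (Fin.mk_lt_mk.2 hij)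
        (Fin.mk_lt_mk.2 hjk) (Fin.ext heq)
      exact this
  · rintro ⟨hc, hs⟩
    constructor
    · intro v
      have h0 := hc (v : ℕ)
      rw [if_pos v.isLt, toL, List.count_eq_countP, countP_ofFn] at h0
      have hset : (Finset.univ.filter fun i => ((w i : ℕ) == (v : ℕ)) = true)
          = (Finset.univ.filter fun i => w i = v) := by
        apply Finset.filter_congr
        intro i _
        simp [Fin.ext_iff]
      rw [← hset]
      exact h0
    · intro j k l hjk hkl heq
      have h1 := hs (j : ℕ) (k : ℕ) (l : ℕ) hjk hkl
        (by rw [toL_length]; exact l.isLt)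
      rw [toL_getD_fin w j, toL_getD_fin w k, toL_getD_fin w l] at h1
      exact h1 (congrArg _ heq)


lemma ins_mem_lt {n : ℕ} {l : List ℕ} {g u : ℕ} (hmem : ∀ u ∈ l, u < n)
    (hu : u ∈ ins n l g) : u < n + 1 := by
  unfold ins at hu
  simp only [List.mem_append, List.mem_cons] at hu
  rcases hu with h | h | h | h
  · exact lt_trans (hmem u (List.mem_of_mem_take h)) (by omega)
  · omega
  · omega
  · exact lt_trans (hmem u (List.mem_of_mem_drop h)) (by omega)

def ofL (n m : ℕ) (l : List ℕ) (hlen : l.length = m) (hmem : ∀ u ∈ l, u < n) :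
    Fin m → Fin n :=
  fun i => ⟨l.getD i 0,
    hmem _ (by rw [List.getD_eq_getElem _ _ (by omega)]; exact List.getElem_mem _)⟩

lemma toL_ofL (n m : ℕ) (l : List ℕ) (hlen : l.length = m) (hmem : ∀ u ∈ l, u < n) :
    toL (ofL n m l hlen hmem) = l := by
  apply List.ext_getElem (by simp [hlen])
  intro i h1 h2
  unfold toL
  show (List.ofFn fun i => (ofL n m l hlen hmem i : ℕ))[i]'(by simp; omega) = l[i]
  rw [List.getElem_ofFn]
  show l.getD i 0 = l[i]
  rw [List.getD_eq_getElem _ _ h2]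

lemma ins_take {n : ℕ} {l : List ℕ} {g : ℕ} (hg : g ≤ l.length) :
    (ins n l g).take g = l.take g :=
  List.take_left' (by simp; omega)

lemma ins_drop {n : ℕ} {l : List ℕ} {g : ℕ} (hg : g ≤ l.length) :
    (ins n l g).drop (g + 2) = l.drop g := by
  have h : ins n l g = (l.take g ++ [n, n]) ++ l.drop g := by simp [ins]
  rw [h]
  exact List.drop_left' (by simp; omega)


def fwd (n : ℕ) (w : Fin (2 * n) → Fin n) (g : ℕ) (hg : g ≤ 2 * n) :
    Fin (2 * (n + 1)) → Fin (n + 1) :=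
  ofL (n + 1) (2 * (n + 1)) (ins n (toL w) g)
    (by rw [ins_length (by rw [toL_length]; omega), toL_length]; omega)
    (fun u hu => ins_mem_lt (fun u' hu' => toL_mem_lt w hu') hu)

lemma fwd_apply {n : ℕ} (w : Fin (2 * n) → Fin n) (g : ℕ) (hg : g ≤ 2 * n)
    (i : Fin (2 * (n + 1))) : (fwd n w g hg i : ℕ) = (ins n (toL w) g).getD i 0 := rfl

lemma toL_fwd {n : ℕ} (w : Fin (2 * n) → Fin n) (g : ℕ) (hg : g ≤ 2 * n) :
    toL (fwd n w g hg) = ins n (toL w) g := toL_ofL _ _ _ _ _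

lemma fwd_isSP {n : ℕ} {w : Fin (2 * n) → Fin n} (hw : IsStirlingPerm w) (g : ℕ)
    (hg : g ≤ 2 * n) : IsStirlingPerm (fwd n w g hg) := by
  rw [isStirling_iff_SPL, toL_fwd]
  exact SPL_ins ((isStirling_iff_SPL w).1 hw) (by rw [toL_length]; omega)

def bwdList {n : ℕ} (w : Fin (2 * (n + 1)) → Fin (n + 1)) : List ℕ :=
  (toL w).take ((toL w).idxOf n) ++ (toL w).drop ((toL w).idxOf n + 2)

lemma bwdList_spec {n : ℕ} {w : Fin (2 * (n + 1)) → Fin (n + 1)} (hw : IsStirlingPerm w) :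
    SPL n (bwdList w) ∧ toL w = ins n (bwdList w) ((toL w).idxOf n) ∧
      (toL w).idxOf n + 1 < 2 * (n + 1) := by
  have h := SPL_split ((isStirling_iff_SPL w).1 hw)
  exact ⟨h.2.2, h.2.1, by have := h.1; rwa [toL_length] at this⟩

def bwd (n : ℕ) (w : Fin (2 * (n + 1)) → Fin (n + 1)) (hw : IsStirlingPerm w) :
    Fin (2 * n) → Fin n :=
  ofL n (2 * n) (bwdList w) (cnt2_length (bwdList_spec hw).1.1)
    (fun u hu => cnt2_mem_lt (bwdList_spec hw).1.1 hu)

lemma bwd_apply {n : ℕ} (w : Fin (2 * (n + 1)) → Fin (n + 1)) (hw : IsStirlingPerm w)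
    (i : Fin (2 * n)) : (bwd n w hw i : ℕ) = (bwdList w).getD i 0 := rfl

lemma bwd_isSP {n : ℕ} (w : Fin (2 * (n + 1)) → Fin (n + 1)) (hw : IsStirlingPerm w) :
    IsStirlingPerm (bwd n w hw) := by
  rw [isStirling_iff_SPL]
  rw [show toL (bwd n w hw) = bwdList w from toL_ofL _ _ _ _ _]
  exact (bwdList_spec hw).1

lemma bwdList_fwd {n : ℕ} (w : Fin (2 * n) → Fin n) (g : ℕ) (hg : g ≤ 2 * n) :
    bwdList (fwd n w g hg) = toL w := by
  have hg' : g ≤ (toL w).length := by rw [toL_length]; omega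
  rw [bwdList, toL_fwd, indexOf_ins (fun u' hu' => toL_mem_lt w hu') hg',
    ins_take hg', ins_drop hg', List.take_append_drop]

lemma indexOf_fwd {n : ℕ} (w : Fin (2 * n) → Fin n) (g : ℕ) (hg : g ≤ 2 * n) :
    (toL (fwd n w g hg)).idxOf n = g := by
  rw [toL_fwd, indexOf_ins (fun u' hu' => toL_mem_lt w hu') (by rw [toL_length]; omega)]

noncomputable def equivIns (n : ℕ) :
    ({w : Fin (2 * n) → Fin n // IsStirlingPerm w} × Fin (2 * n + 1)) ≃
      {w : Fin (2 * (n + 1)) → Fin (n + 1) // IsStirlingPerm w} where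
  toFun p := ⟨fwd n p.1.1 (p.2 : ℕ) (by omega), fwd_isSP p.1.2 _ _⟩
  invFun q := (⟨bwd n q.1 q.2, bwd_isSP q.1 q.2⟩,
    ⟨(toL q.1).idxOf n, by have := (bwdList_spec q.2).2.2; omega⟩)
  left_inv := by
    rintro ⟨⟨w, hw⟩, g⟩
    have hg : (g : ℕ) ≤ 2 * n := by omega
    refine Prod.ext (Subtype.ext (funext fun i => Fin.ext ?_)) (Fin.ext ?_)
    · dsimp only
      rw [bwd_apply, bwdList_fwd w (g : ℕ) hg, toL_getD w i.isLt]
    · dsimp only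
      exact indexOf_fwd w (g : ℕ) hg
  right_inv := by
    rintro ⟨w, hw⟩
    refine Subtype.ext (funext fun i => Fin.ext ?_)
    dsimp only
    rw [fwd_apply, show toL (bwd n w hw) = bwdList w from toL_ofL _ _ _ _ _,
      ← (bwdList_spec hw).2.1, toL_getD w i.isLt]

lemma wordAscents_fwd {n : ℕ} (w : Fin (2 * n) → Fin n) (g : ℕ) (hg : g ≤ 2 * n) :
    wordAscents (fwd n w g hg) = wordAscents w +
      (if g = 0 ∨ (g < 2 * n ∧ (toL w).getD (g - 1) 0 < (toL w).getD g 0)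
        then 0 else 1) := by
  rw [wordAscents_eq_ascR, wordAscents_eq_ascR, toL_fwd,
    ascR_ins (fun u' hu' => toL_mem_lt w hu') (by rw [toL_length]; omega)]
  rw [toL_length]


/-- The neutral-gap predicate. -/
def Neut (n : ℕ) {m : ℕ} (w : Fin m → Fin n) (g : ℕ) : Prop :=
  g = 0 ∨ (g < m ∧ (toL w).getD (g - 1) 0 < (toL w).getD g 0)

lemma card_neutral {n : ℕ} (hn : 1 ≤ n) (w : Fin (2 * n) → Fin n) :
    Nat.card {g : Fin (2 * n + 1) // Neut n w (g : ℕ)} = wordAscents w + 1 := by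
  classical
  rw [Nat.card_eq_fintype_card, Fintype.card_subtype, Finset.card_filter]
  rw [Fin.sum_univ_eq_sum_range (fun i => if Neut n w i then 1 else 0) (2 * n + 1)]
  rw [Finset.sum_range_succ' (fun i => if Neut n w i then 1 else 0) (2 * n)]
  have h0 : (if Neut n w 0 then 1 else 0) = 1 := if_pos (Or.inl rfl)
  rw [h0]
  have hsplit : 2 * n = (2 * n - 1) + 1 := by omega
  rw [show Finset.range (2 * n) = Finset.range ((2 * n - 1) + 1) from by rw [← hsplit],
    Finset.sum_range_succ]
  have hlast : (if Neut n w (2 * n - 1 + 1) then 1 else 0) = 0 := by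
    rw [if_neg]
    rw [Neut]
    push_neg
    exact ⟨by omega, by omega⟩
  rw [hlast]
  have hcongr : ∀ i ∈ Finset.range (2 * n - 1),
      (if Neut n w (i + 1) then 1 else 0) =
        (if (toL w).getD i 0 < (toL w).getD (i + 1) 0 then 1 else 0) := by
    intro i hi
    rw [Finset.mem_range] at hi
    rw [Neut]
    congr 1
    simp only [eq_iff_iff]
    constructor
    · rintro (h | h)
      · omega
      · simpa using h.2
    · intro h
      exact Or.inr ⟨by omega, by simpa using h⟩
  rw [Finset.sum_congr rfl hcongr]
  rw [wordAscents_eq_ascR, ascR_eq_card_filter, Finset.card_filter]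
  rw [toL_length]

lemma wordAscents_le {n : ℕ} (hn : 1 ≤ n) (w : Fin (2 * n) → Fin n) :
    wordAscents w ≤ 2 * n := by
  have h := card_neutral hn w
  have h2 : Nat.card {g : Fin (2 * n + 1) // Neut n w (g : ℕ)} ≤ 2 * n + 1 := by
    classical
    rw [Nat.card_eq_fintype_card]
    have := Fintype.card_subtype_le (fun g : Fin (2 * n + 1) => Neut n w (g : ℕ))
    simpa using this
  omega

lemma card_nonneutral {n : ℕ} (hn : 1 ≤ n) (w : Fin (2 * n) → Fin n) :
    Nat.card {g : Fin (2 * n + 1) // ¬ Neut n w (g : ℕ)} = 2 * n - wordAscents w := by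
  classical
  rw [Nat.card_eq_fintype_card, Fintype.card_subtype_compl]
  have h := card_neutral hn w
  rw [Nat.card_eq_fintype_card] at h
  rw [h]
  have h2 := wordAscents_le hn w
  simp only [Fintype.card_fin]
  omega


instance neutDec {n m : ℕ} (w : Fin m → Fin n) (g : ℕ) : Decidable (Neut n w g) :=
  inferInstanceAs (Decidable (g = 0 ∨ (g < m ∧ (toL w).getD (g - 1) 0 < (toL w).getD g 0)))

lemma wordAscents_fwd' {n : ℕ} (w : Fin (2 * n) → Fin n) (g : ℕ) (hg : g ≤ 2 * n) :
    wordAscents (fwd n w g hg) = wordAscents w + (if Neut n w g then 0 else 1) := by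
  rw [wordAscents_fwd w g hg]; rfl

lemma card_fiber {n : ℕ} (hn : 1 ≤ n) (w : Fin (2 * n) → Fin n) (t : ℕ) :
    Nat.card {g : Fin (2 * n + 1) //
        wordAscents w + (if Neut n w (g : ℕ) then 0 else 1) = t} =
      (if wordAscents w = t then t + 1 else 0) +
      (if wordAscents w + 1 = t then 2 * n - wordAscents w else 0) := by
  classical
  by_cases h1 : wordAscents w = t
  · have he : ∀ g : Fin (2 * n + 1),
        (wordAscents w + (if Neut n w (g : ℕ) then 0 else 1) = t) ↔ Neut n w (g : ℕ) := by
      intro g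
      by_cases hg : Neut n w (g : ℕ) <;> simp [hg] <;> omega
    rw [Nat.card_congr (Equiv.subtypeEquivRight he), card_neutral hn w]
    rw [if_pos h1, if_neg (by omega)]
    omega
  · by_cases h2 : wordAscents w + 1 = t
    · have he : ∀ g : Fin (2 * n + 1),
          (wordAscents w + (if Neut n w (g : ℕ) then 0 else 1) = t) ↔ ¬ Neut n w (g : ℕ) := by
        intro g
        by_cases hg : Neut n w (g : ℕ) <;> simp [hg] <;> omega
      rw [Nat.card_congr (Equiv.subtypeEquivRight he), card_nonneutral hn w]
      rw [if_neg h1, if_pos h2]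
      omega
    · have : IsEmpty {g : Fin (2 * n + 1) //
          wordAscents w + (if Neut n w (g : ℕ) then 0 else 1) = t} := by
        refine ⟨fun x => ?_⟩
        have hx := x.2
        by_cases hg : Neut n w (x.1 : ℕ)
        · rw [if_pos hg] at hx; omega
        · rw [if_neg hg] at hx; omega
      rw [Nat.card_of_isEmpty, if_neg h1, if_neg h2]

def prodSubtypeSigma {A B : Type*} (P : A × B → Prop) :
    {p : A × B // P p} ≃ Σ a : A, {b : B // P (a, b)} where
  toFun x := ⟨x.1.1, x.1.2, by rw [Prod.mk.eta]; exact x.2⟩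
  invFun s := ⟨(s.1, s.2.1), s.2.2⟩
  left_inv x := rfl
  right_inv s := rfl

lemma card_subfilter {n : ℕ} (t : ℕ) [Fintype {w : Fin (2*n) → Fin n // IsStirlingPerm w}]
    [DecidablePred fun x : {w : Fin (2*n) → Fin n // IsStirlingPerm w} => wordAscents x.1 = t] :
    (Finset.univ.filter fun x : {w : Fin (2*n) → Fin n // IsStirlingPerm w} =>
      wordAscents x.1 = t).card =
      Nat.card {w : Fin (2*n) → Fin n // IsStirlingPerm w ∧ wordAscents w = t} := by
  classical
  rw [← Fintype.card_subtype, ← Nat.card_eq_fintype_card]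
  exact Nat.card_congr (Equiv.subtypeSubtypeEquivSubtypeInter
    (fun w : Fin (2*n) → Fin n => IsStirlingPerm w) (fun w => wordAscents w = t))



lemma stirlingC_rec {n m : ℕ} (hn : 1 ≤ n) (hm : 1 ≤ m) :
    stirlingC (n + 1) m = m * stirlingC n m +
      (if 2 ≤ m then (2 * (n + 1) - m) * stirlingC n (m - 1) else 0) := by
  classical
  have e1 : {w : Fin (2*(n+1)) → Fin (n+1) // IsStirlingPerm w ∧ wordAscents w = m - 1} ≃
      {x : {w : Fin (2*(n+1)) → Fin (n+1) // IsStirlingPerm w} // wordAscents x.1 = m - 1} :=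
    (Equiv.subtypeSubtypeEquivSubtypeInter
      (fun w : Fin (2*(n+1)) → Fin (n+1) => IsStirlingPerm w)
      (fun w => wordAscents w = m - 1)).symm
  have e2 : {p : ({w : Fin (2*n) → Fin n // IsStirlingPerm w} × Fin (2*n+1)) //
      wordAscents ((equivIns n) p).1 = m - 1} ≃
      {x : {w : Fin (2*(n+1)) → Fin (n+1) // IsStirlingPerm w} // wordAscents x.1 = m - 1} :=
    (equivIns n).subtypeEquiv (fun p => Iff.rfl)
  have e3 := prodSubtypeSigma
    (fun p : ({w : Fin (2*n) → Fin n // IsStirlingPerm w} × Fin (2*n+1)) =>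
      wordAscents ((equivIns n) p).1 = m - 1)
  have hcard : stirlingC (n+1) m = Nat.card
      (Σ x : {w : Fin (2*n) → Fin n // IsStirlingPerm w},
        {g : Fin (2*n+1) // wordAscents ((equivIns n) (x, g)).1 = m - 1}) := by
    rw [stirlingC]
    exact Nat.card_congr ((e1.trans e2.symm).trans e3)
  rw [hcard, Nat.card_eq_fintype_card, Fintype.card_sigma]
  have hfib : ∀ x : {w : Fin (2*n) → Fin n // IsStirlingPerm w},
      Fintype.card {g : Fin (2*n+1) // wordAscents ((equivIns n) (x, g)).1 = m - 1} =
        (if wordAscents x.1 = m - 1 then (m - 1) + 1 else 0) +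
        (if wordAscents x.1 + 1 = m - 1 then 2*n - wordAscents x.1 else 0) := by
    intro x
    rw [← Nat.card_eq_fintype_card]
    have hrw : ∀ g : Fin (2*n+1), wordAscents ((equivIns n) (x, g)).1 =
        wordAscents x.1 + (if Neut n x.1 (g : ℕ) then 0 else 1) := by
      intro g
      have h0 : ((equivIns n) (x, g)).1 = fwd n x.1 (g : ℕ) (by omega) := rfl
      rw [h0, wordAscents_fwd']
    rw [Nat.card_congr (Equiv.subtypeEquivRight (fun g => by rw [hrw g]))]
    exact card_fiber hn x.1 (m - 1)
  rw [Finset.sum_congr rfl (fun x _ => hfib x), Finset.sum_add_distrib]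
  congr 1
  · rw [← Finset.sum_filter (fun x : {w : Fin (2*n) → Fin n // IsStirlingPerm w} =>
      wordAscents x.1 = m - 1) (fun _ => (m - 1) + 1)]
    rw [Finset.sum_const, smul_eq_mul, card_subfilter]
    rw [show (m - 1) + 1 = m from by omega, Nat.mul_comm]
    rfl
  · by_cases hm2 : 2 ≤ m
    · rw [if_pos hm2]
      have hpt : ∀ x ∈ (Finset.univ : Finset {w : Fin (2*n) → Fin n // IsStirlingPerm w}),
          (if wordAscents x.1 + 1 = m - 1 then 2*n - wordAscents x.1 else 0) =
          (if wordAscents x.1 = m - 1 - 1 then 2 * (n + 1) - m else 0) := by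
        intro x _
        by_cases h : wordAscents x.1 + 1 = m - 1
        · rw [if_pos h, if_pos (by omega)]
          omega
        · rw [if_neg h, if_neg (by omega)]
      rw [Finset.sum_congr rfl hpt]
      rw [← Finset.sum_filter (fun x : {w : Fin (2*n) → Fin n // IsStirlingPerm w} =>
        wordAscents x.1 = m - 1 - 1) (fun _ => 2 * (n + 1) - m)]
      rw [Finset.sum_const, smul_eq_mul, card_subfilter, Nat.mul_comm]
      rfl
    · rw [if_neg hm2]
      have hpt : ∀ x ∈ (Finset.univ : Finset {w : Fin (2*n) → Fin n // IsStirlingPerm w}),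
          (if wordAscents x.1 + 1 = m - 1 then 2*n - wordAscents x.1 else 0) = 0 := by
        intro x _
        rw [if_neg (by omega)]
      rw [Finset.sum_congr rfl hpt]
      exact Finset.sum_const_zero


lemma isStirling_one (w : Fin (2 * 1) → Fin 1) : IsStirlingPerm w ∧ wordAscents w = 0 := by
  refine ⟨⟨fun v => ?_, fun j k l hjk hkl _ => ?_⟩, ?_⟩
  · rw [Finset.filter_true_of_mem (fun i _ => Subsingleton.elim (w i) v)]
    simp
  · rw [Fin.lt_def] at hjk hkl
    have h1 := j.isLt
    have h2 := l.isLt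
    omega
  · rw [wordAscents, List.countP_eq_zero]
    intro p _
    have h1 : p.1 = p.2 := Subsingleton.elim _ _
    simp [h1]

lemma stirlingC_one_one : stirlingC 1 1 = 1 := by
  rw [stirlingC]
  rw [Nat.card_congr (Equiv.subtypeUnivEquiv (fun w => ⟨(isStirling_one w).1,
    (isStirling_one w).2⟩))]
  rw [Nat.card_eq_fintype_card]
  simp

lemma stirlingC_one_ge {m : ℕ} (hm : 2 ≤ m) : stirlingC 1 m = 0 := by
  rw [stirlingC]
  have : IsEmpty {w : Fin (2 * 1) → Fin 1 // IsStirlingPerm w ∧ wordAscents w = m - 1} := by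
    refine ⟨fun x => ?_⟩
    have h1 := x.2.2
    have h2 := (isStirling_one x.1).2
    omega
  exact Nat.card_of_isEmpty

lemma stirlingC_vanish : ∀ n, 1 ≤ n → ∀ m, n < m → stirlingC n m = 0 := by
  intro n hn
  induction n, hn using Nat.le_induction with
  | base => exact fun m hm => stirlingC_one_ge (by omega)
  | succ n hn ih =>
    intro m hm
    rw [stirlingC_rec hn (by omega), if_pos (by omega), ih m (by omega), ih (m-1) (by omega)]
    simp


open MvPolynomial in
lemma D_mono (D : Derivation ℚ (MvPolynomial (Fin 2) ℚ) (MvPolynomial (Fin 2) ℚ))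
    (hx : D (X 0) = X 0 * X 1 ^ 2) (hy : D (X 1) = X 0 * X 1 ^ 2)
    {m k : ℕ} (hm : 1 ≤ m) (hk : 1 ≤ k) :
    D (X 0 ^ m * X 1 ^ k) =
      (m : MvPolynomial (Fin 2) ℚ) * (X 0 ^ m * X 1 ^ (k + 2)) +
      (k : MvPolynomial (Fin 2) ℚ) * (X 0 ^ (m + 1) * X 1 ^ (k + 1)) := by
  obtain ⟨m', rfl⟩ : ∃ m', m = m' + 1 := ⟨m - 1, by omega⟩
  obtain ⟨k', rfl⟩ : ∃ k', k = k' + 1 := ⟨k - 1, by omega⟩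
  rw [Derivation.leibniz, Derivation.leibniz_pow, Derivation.leibniz_pow, hx, hy]
  simp only [Nat.add_sub_cancel, smul_eq_mul, nsmul_eq_mul]
  push_cast
  ring

end StirlingAux

open MvPolynomial StirlingAux

theorem stmt4
    (D : Derivation ℚ (MvPolynomial (Fin 2) ℚ) (MvPolynomial (Fin 2) ℚ))
    (hx : D (X 0) = X 0 * X 1 ^ 2) (hy : D (X 1) = X 0 * X 1 ^ 2)
    (n : ℕ) (hn : 1 ≤ n) :
    (⇑D)^[n] (X 0) =
      ∑ m ∈ Finset.Icc 1 n,
        (stirlingC n m : MvPolynomial (Fin 2) ℚ) * X 0 ^ m * X 1 ^ (2 * n + 1 - m) := by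
  induction n, hn using Nat.le_induction with
  | base =>
    rw [Function.iterate_one, hx, Finset.Icc_self, Finset.sum_singleton, stirlingC_one_one]
    norm_num
  | succ n hn ih =>
    rw [Function.iterate_succ_apply', ih, map_sum]
    have hterm : ∀ m ∈ Finset.Icc 1 n,
        D ((stirlingC n m : MvPolynomial (Fin 2) ℚ) * X 0 ^ m * X 1 ^ (2 * n + 1 - m)) =
          (m : MvPolynomial (Fin 2) ℚ) * (stirlingC n m : MvPolynomial (Fin 2) ℚ) *
            (X 0 ^ m * X 1 ^ (2 * (n + 1) + 1 - m)) +
          ((2 * n + 1 - m : ℕ) : MvPolynomial (Fin 2) ℚ) *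
            (stirlingC n m : MvPolynomial (Fin 2) ℚ) *
            (X 0 ^ (m + 1) * X 1 ^ (2 * (n + 1) + 1 - (m + 1))) := by
      intro m hmem
      rw [Finset.mem_Icc] at hmem
      rw [mul_assoc,
        show (stirlingC n m : MvPolynomial (Fin 2) ℚ) * (X 0 ^ m * X 1 ^ (2 * n + 1 - m))
          = (stirlingC n m) • (X 0 ^ m * X 1 ^ (2 * n + 1 - m)) from (nsmul_eq_mul _ _).symm,
        map_nsmul]
      rw [D_mono D hx hy (by omega) (show 1 ≤ 2 * n + 1 - m by omega)]
      rw [show 2 * n + 1 - m + 2 = 2 * (n + 1) + 1 - m from by omega,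
        show 2 * n + 1 - m + 1 = 2 * (n + 1) + 1 - (m + 1) from by omega,
        nsmul_eq_mul]
      ring
    rw [Finset.sum_congr rfl hterm, Finset.sum_add_distrib]
    -- reindex the second sum
    have hmap : Finset.Icc 2 (n + 1) = (Finset.Icc 1 n).map (addRightEmbedding 1) := by
      rw [Finset.map_add_right_Icc]
    have hB : (∑ m ∈ Finset.Icc 1 n,
        ((2 * n + 1 - m : ℕ) : MvPolynomial (Fin 2) ℚ) *
          (stirlingC n m : MvPolynomial (Fin 2) ℚ) *
          (X 0 ^ (m + 1) * X 1 ^ (2 * (n + 1) + 1 - (m + 1)))) =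
        ∑ m ∈ Finset.Icc 2 (n + 1),
          ((2 * (n + 1) - m : ℕ) : MvPolynomial (Fin 2) ℚ) *
            (stirlingC n (m - 1) : MvPolynomial (Fin 2) ℚ) *
            (X 0 ^ m * X 1 ^ (2 * (n + 1) + 1 - m)) := by
      rw [hmap, Finset.sum_map]
      apply Finset.sum_congr rfl
      intro m hmem
      rw [Finset.mem_Icc] at hmem
      simp only [addRightEmbedding_apply]
      rw [show m + 1 - 1 = m from rfl,
        show 2 * (n + 1) - (m + 1) = 2 * n + 1 - m from by omega]
    rw [hB]
    -- extend the first sum to Icc 1 (n+1)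
    have hins1 : Finset.Icc 1 (n + 1) = insert (n + 1) (Finset.Icc 1 n) := by
      ext a
      simp only [Finset.mem_Icc, Finset.mem_insert]
      omega
    have hA : (∑ m ∈ Finset.Icc 1 n,
        (m : MvPolynomial (Fin 2) ℚ) * (stirlingC n m : MvPolynomial (Fin 2) ℚ) *
          (X 0 ^ m * X 1 ^ (2 * (n + 1) + 1 - m))) =
        ∑ m ∈ Finset.Icc 1 (n + 1),
          (m : MvPolynomial (Fin 2) ℚ) * (stirlingC n m : MvPolynomial (Fin 2) ℚ) *
            (X 0 ^ m * X 1 ^ (2 * (n + 1) + 1 - m)) := by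
      rw [hins1, Finset.sum_insert (by simp)]
      rw [stirlingC_vanish n hn (n + 1) (by omega)]
      simp
    rw [hA]
    -- now split both sides at m = 1
    have hins2 : Finset.Icc 1 (n + 1) = insert 1 (Finset.Icc 2 (n + 1)) := by
      ext a
      simp only [Finset.mem_Icc, Finset.mem_insert]
      omega
    have hnotmem1 : (1 : ℕ) ∉ Finset.Icc 2 (n + 1) := by simp
    rw [hins2, Finset.sum_insert hnotmem1, Finset.sum_insert hnotmem1]
    rw [add_assoc, ← Finset.sum_add_distrib]
    congr 1
    · -- m = 1 terms
      rw [stirlingC_rec hn (by omega), if_neg (by omega)]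
      push_cast
      ring
    · apply Finset.sum_congr rfl
      intro m hmem
      rw [Finset.mem_Icc] at hmem
      rw [stirlingC_rec hn (by omega), if_pos (by omega)]
      push_cast
      ring
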